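/- For n ≥ 1 and w ∈ 𝔥, one has f_n(w) = (-1)^{n+1} φ( yⁿz ⊛̃ φ(w) ), where z = x+y. -/

import Mathlib

open scoped BigOperators

abbrev Ltr := Fin 2

/-- `𝔥 = ℚ⟨x,y⟩`, realized as the monoid algebra of the free monoid on two letters. -/
abbrev H := MonoidAlgebra ℚ (FreeMonoid Ltr)

/-- The word `u₁⋯u_m` as an element of `𝔥`. -/
noncomputable def wrd (l : List Ltr) : H := MonoidAlgebra.of ℚ (FreeMonoid Ltr) (FreeMonoid.ofList l)

/-- The generator `x`. -/
noncomputable def Xh : H := wrd [0]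
/-- The generator `y`. -/
noncomputable def Yh : H := wrd [1]

/-- `e₀ = x`, `e₁ = -y`. -/
noncomputable def eH (a : Ltr) : H := if a = 0 then Xh else -Yh

/-- The product `e_{a₁}⋯e_{a_m} ∈ 𝔥` for an `e`-word. -/
noncomputable def ew (l : List Ltr) : H := ((-1 : ℚ) ^ (l.count 1)) • wrd l

/-- The symmetric harmonic product on basis `e`-words:
`e_a ⊛̃ e_{b₁}⋯e_{bₙ} = e_{b₁}⋯e_{bₙ} ⊛̃ e_a = e_{ab₁}⋯e_{abₙ}` and
`e_a w₁ ⊛̃ e_b w₂ = e_{ab}(w₁ ⊛̃ e_b w₂) + e_{ab}(e_a w₁ ⊛̃ w₂) - e_{ab}e₀(w₁ ⊛̃ w₂)`. -/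
noncomputable def mstE : List Ltr → List Ltr → H
  | [a], b :: bs => ew ((b :: bs).map (fun c => a * c))
  | a :: a' :: as, [b] => ew ((a :: a' :: as).map (fun c => c * b))
  | a :: a' :: as, b :: b' :: bs =>
      eH (a * b) * mstE (a' :: as) (b :: b' :: bs)
      + eH (a * b) * mstE (a :: a' :: as) (b' :: bs)
      - eH (a * b) * Xh * mstE (a' :: as) (b' :: bs)
  | _, _ => 0
termination_by l₁ l₂ => l₁.length + l₂.length

/-- The symmetric harmonic product `⊛̃ : 𝔥' ⊗ 𝔥' → 𝔥'`, extended bilinearly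
(using that the word `u₁⋯u_m` equals `(-1)^{#{i : uᵢ = y}} e_{u₁}⋯e_{u_m}`). -/
noncomputable def mst (f g : H) : H :=
  f.coeff.sum fun u cu => g.coeff.sum fun v cv =>
    (cu * cv * (-1 : ℚ) ^ ((FreeMonoid.toList u).count 1)
      * (-1 : ℚ) ^ ((FreeMonoid.toList v).count 1)) •
      mstE (FreeMonoid.toList u) (FreeMonoid.toList v)

/-- `dn n w = yⁿ ⋄ w` where `⋄` is the bilinear map with `1⋄w = w⋄1 = w`,
`yw₁ ⋄ yw₂ = y(yw₁ ⋄ w₂) - y(w₁ ⋄ xw₂)` and `yw₁ ⋄ xw₂ = x(yw₁ ⋄ w₂) + y(w₁ ⋄ xw₂)`. -/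
noncomputable def dn : ℕ → List Ltr → H
  | 0, u => wrd u
  | n + 1, [] => wrd (List.replicate (n + 1) 1)
  | n + 1, a :: u =>
      if a = 0 then Xh * dn (n + 1) u + Yh * dn n (a :: u)
      else Yh * dn (n + 1) u - Yh * dn n ((0 : Ltr) :: u)
termination_by n u => (n, u.length)

/-- `dia n f = yⁿ ⋄ f`, extended linearly. -/
noncomputable def dia (n : ℕ) (f : H) : H := f.coeff.sum fun u c => c • dn n u.toList

/-- `f_n : 𝔥 → 𝔥` for `n ∈ ℤ`: `f_n = 0` for `n < 0`, `f₀ = id`, and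
`f_n(w) = yⁿ ⋄ w - (y^{n-1} ⋄ w)y` for `n ≥ 1`. -/
noncomputable def fZ (n : ℤ) (f : H) : H :=
  if n < 0 then 0 else if n = 0 then f else dia n.toNat f - dia (n.toNat - 1) f * Yh

/-- The automorphism `φ` with `φ(x) = z = x+y`, `φ(y) = -y`. -/
noncomputable def phiH : H →ₐ[ℚ] H :=
  MonoidAlgebra.lift ℚ H (FreeMonoid Ltr)
    (FreeMonoid.lift fun a => if a = 0 then Xh + Yh else -Yh)

lemma wrd_append (l l' : List Ltr) : wrd (l ++ l') = wrd l * wrd l' := by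
  unfold wrd
  rw [← map_mul]
  rfl
lemma wrd_nil : wrd [] = 1 := rfl
lemma wrd_cons (a : Ltr) (l : List Ltr) : wrd (a :: l) = wrd [a] * wrd l := by
  rw [← wrd_append]; rfl
lemma wrd_single (u : FreeMonoid Ltr) : wrd u.toList = MonoidAlgebra.single u 1 := by
  unfold wrd; rfl
lemma wrd_replicate (n : ℕ) : wrd (List.replicate n 1) = Yh ^ n := by
  induction n with
  | zero => simp [wrd_nil]
  | succ n ih => rw [List.replicate_succ, wrd_cons, ih, pow_succ']; rfl
lemma phiH_wrd_single (a : Ltr) : phiH (wrd [a]) = if a = 0 then Xh + Yh else -Yh := by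
  unfold phiH wrd
  rw [MonoidAlgebra.lift_of]
  exact FreeMonoid.lift_eval_of _ a
lemma phiH_X : phiH Xh = Xh + Yh := by
  exact (by simpa using phiH_wrd_single 0 : phiH (wrd [0]) = Xh + Yh)
lemma phiH_Y : phiH Yh = -Yh := by
  exact (by simpa using phiH_wrd_single 1 : phiH (wrd [1]) = -Yh)
lemma phiH_phiH_wrd (l : List Ltr) : phiH (phiH (wrd l)) = wrd l := by
  induction l with
  | nil => rw [wrd_nil, map_one, map_one]
  | cons a t ih =>
    rw [wrd_cons, map_mul, map_mul, ih, phiH_wrd_single]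
    congr 1
    fin_cases a <;> simp only [Fin.isValue, show ((fun (i:Ltr) => i) ⟨0,by omega⟩ : Ltr) = 0 from rfl, show ((fun (i:Ltr) => i) ⟨1,by omega⟩ : Ltr) = 1 from rfl]
    · rw [if_pos trivial, map_add, phiH_X, phiH_Y, add_neg_cancel_right]; rfl
    · rw [if_neg (by trivial), map_neg, phiH_Y, neg_neg]; rfl
lemma linext (T S : H →ₗ[ℚ] H) (h : ∀ l : List Ltr, T (wrd l) = S (wrd l)) : ∀ f, T f = S f := by
  intro f
  induction f using MonoidAlgebra.induction_linear with
  | zero => simp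
  | add a b ha hb => rw [map_add, map_add, ha, hb]
  | single u c =>
    have : (MonoidAlgebra.single u c : H) = c • wrd u.toList := by
      rw [wrd_single, MonoidAlgebra.smul_single, smul_eq_mul, mul_one]
    rw [this, map_smul, map_smul, h]
lemma phiH_phiH (f : H) : phiH (phiH f) = f := by
  exact linext (phiH.toLinearMap.comp phiH.toLinearMap) (LinearMap.id)
    (fun l => phiH_phiH_wrd l) f
lemma dn_zero (u : List Ltr) : dn 0 u = wrd u := by rw [dn]
lemma dn_nil (n : ℕ) : dn n [] = Yh ^ n := by
  cases n with
  | zero => rw [dn]; simp [wrd_nil]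
  | succ n => rw [dn]; exact wrd_replicate (n+1)
lemma dn_cons0 (n : ℕ) (u : List Ltr) :
    dn (n+1) ((0:Ltr) :: u) = Xh * dn (n+1) u + Yh * dn n ((0:Ltr) :: u) := by
  rw [dn]; simp
lemma dn_cons1 (n : ℕ) (u : List Ltr) :
    dn (n+1) ((1:Ltr) :: u) = Yh * dn (n+1) u - Yh * dn n ((0:Ltr) :: u) := by
  rw [dn]; simp
noncomputable def diaL (n : ℕ) : H →ₗ[ℚ] H :=
  Finsupp.linearCombination ℚ (fun u : FreeMonoid Ltr => dn n u.toList)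
    ∘ₗ (MonoidAlgebra.coeffLinearEquiv ℚ : H ≃ₗ[ℚ] _).toLinearMap
lemma dia_eq (n : ℕ) (f : H) : dia n f = diaL n f :=
  (Finsupp.linearCombination_apply ℚ f.coeff).symm
lemma dia_wrd (n : ℕ) (l : List Ltr) : dia n (wrd l) = dn n l := by
  unfold dia
  rw [show wrd l = MonoidAlgebra.single (FreeMonoid.ofList l) 1 from rfl]
  rw [MonoidAlgebra.sum_single_index (by simp)]
  simp
lemma X_mul_wrd (l : List Ltr) : Xh * wrd l = wrd ((0:Ltr) :: l) := (wrd_cons 0 l).symm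
lemma Y_mul_wrd (l : List Ltr) : Yh * wrd l = wrd ((1:Ltr) :: l) := (wrd_cons 1 l).symm
lemma dia_zero_id (f : H) : dia 0 f = f := by
  rw [dia_eq]
  exact linext (diaL 0) LinearMap.id (fun l => by
    rw [← dia_eq, dia_wrd, dn_zero]; rfl) f
lemma dia_X (n : ℕ) (f : H) :
    dia (n+1) (Xh * f) = Xh * dia (n+1) f + Yh * dia n (Xh * f) := by
  simp only [dia_eq]
  exact linext ((diaL (n+1)).comp (LinearMap.mulLeft ℚ Xh))
    (((LinearMap.mulLeft ℚ Xh).comp (diaL (n+1))) +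
      ((LinearMap.mulLeft ℚ Yh).comp ((diaL n).comp (LinearMap.mulLeft ℚ Xh))))
    (fun l => by
      simp only [LinearMap.comp_apply, LinearMap.mulLeft_apply, LinearMap.add_apply, ← dia_eq,
        X_mul_wrd, dia_wrd]
      exact dn_cons0 n l) f
lemma dia_Y (n : ℕ) (f : H) :
    dia (n+1) (Yh * f) = Yh * dia (n+1) f - Yh * dia n (Xh * f) := by
  simp only [dia_eq]
  exact linext ((diaL (n+1)).comp (LinearMap.mulLeft ℚ Yh))
    (((LinearMap.mulLeft ℚ Yh).comp (diaL (n+1))) -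
      ((LinearMap.mulLeft ℚ Yh).comp ((diaL n).comp (LinearMap.mulLeft ℚ Xh))))
    (fun l => by
      simp only [LinearMap.comp_apply, LinearMap.mulLeft_apply, LinearMap.sub_apply, ← dia_eq,
        X_mul_wrd, Y_mul_wrd, dia_wrd]
      exact dn_cons1 n l) f
lemma dia_XY (n : ℕ) (f : H) : dia n ((Xh + Yh) * f) = (Xh + Yh) * dia n f := by
  cases n with
  | zero => rw [dia_zero_id, dia_zero_id]
  | succ n =>
    rw [add_mul, dia_eq, map_add, ← dia_eq, ← dia_eq, dia_X, dia_Y, add_mul]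
    abel
noncomputable def Gf (n : ℕ) (b : List Ltr) : H := phiH (dia n (phiH (wrd b)))
noncomputable def Hf (n : ℕ) (b : List Ltr) : H := phiH (dia n (Xh * phiH (wrd b)))
noncomputable def HN : ℕ → List Ltr → H
  | 0, _ => 0
  | m + 1, b => Hf m b
lemma neg_Y_pow (n : ℕ) : (-Yh) ^ n = ((-1:ℚ)^n) • Yh ^ n := by
  rw [show (-Yh) = ((-1:ℚ) • Yh) by simp, smul_pow]
lemma Gf_zero (b : List Ltr) : Gf 0 b = wrd b := by
  rw [Gf, dia_zero_id, phiH_phiH]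
lemma Gf_nil (n : ℕ) : Gf n [] = ((-1:ℚ)^n) • Yh ^ n := by
  rw [Gf, wrd_nil, map_one, show (1:H) = wrd [] from wrd_nil.symm, dia_wrd, dn_nil, map_pow,
    phiH_Y, neg_Y_pow]
lemma phiH_wrd_cons0 (b : List Ltr) : phiH (wrd ((0:Ltr) :: b)) = (Xh + Yh) * phiH (wrd b) := by
  rw [wrd_cons, map_mul, phiH_wrd_single]; simp
lemma phiH_wrd_cons1 (b : List Ltr) : phiH (wrd ((1:Ltr) :: b)) = -(Yh * phiH (wrd b)) := by
  rw [wrd_cons, map_mul, phiH_wrd_single]; simp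
lemma Gf_cons0 (n : ℕ) (b : List Ltr) : Gf n ((0:Ltr) :: b) = Xh * Gf n b := by
  rw [Gf, phiH_wrd_cons0, dia_XY, map_mul, map_add, phiH_X, phiH_Y, Gf]
  congr 1
  abel
lemma Gf_cons1 (n : ℕ) (b : List Ltr) :
    Gf n ((1:Ltr) :: b) = Yh * Gf n b - Yh * HN n b := by
  cases n with
  | zero =>
    rw [HN, Gf_zero, Gf_zero, mul_zero, sub_zero, wrd_cons]; rfl
  | succ n =>
    rw [Gf, HN, phiH_wrd_cons1, dia_eq, map_neg, ← dia_eq, dia_Y, map_neg, map_sub,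
      map_mul, map_mul, phiH_Y, neg_sub, ← Gf, ← Hf]
    noncomm_ring
lemma Hf_eq (n : ℕ) (b : List Ltr) : Hf n b = (Xh + Yh) * Gf n b - Yh * HN n b := by
  cases n with
  | zero =>
    rw [Hf, HN, dia_zero_id, map_mul, phiH_X, Gf, dia_zero_id, mul_zero, sub_zero]
  | succ n =>
    rw [Hf, HN, dia_X, map_add, map_mul, map_mul, phiH_X, phiH_Y, ← Gf, ← Hf, neg_mul,
      sub_eq_add_neg]
lemma dn_X (m : ℕ) : dn m [(0:Ltr)] = ∑ k ∈ Finset.range (m+1), Yh^k * Xh * Yh^(m-k) := by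
  induction m with
  | zero => simp [dn_zero, ← X_mul_wrd, wrd_nil]
  | succ m ih =>
    rw [dn_cons0, dn_nil, ih, Finset.sum_range_succ' _ (m+1)]
    simp only [pow_zero, one_mul, Nat.sub_zero, Finset.mul_sum]
    rw [add_comm]
    congr 1
    refine Finset.sum_congr rfl fun k hk => ?_
    rw [Nat.succ_sub_succ, pow_succ']
    simp [mul_assoc]
lemma phiH_YXY (k j : ℕ) :
    phiH (Yh^k * Xh * Yh^j) = ((-1:ℚ)^(k+j)) • (Yh^k * (Xh+Yh) * Yh^j) := by
  rw [map_mul, map_mul, map_pow, map_pow, phiH_X, phiH_Y, neg_Y_pow, neg_Y_pow,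
    smul_mul_assoc, smul_mul_assoc, mul_smul_comm, smul_smul, ← pow_add]
lemma Hf_nil (m : ℕ) :
    Hf m [] = ((-1:ℚ)^m) • ∑ k ∈ Finset.range (m+1), Yh^k * (Xh+Yh) * Yh^(m-k) := by
  rw [Hf, wrd_nil, map_one, mul_one, show Xh = wrd [(0:Ltr)] from rfl, dia_wrd, dn_X,
    map_sum, Finset.smul_sum]
  apply Finset.sum_congr rfl
  intro k hk
  rw [phiH_YXY]
  congr 1
  have : k + (m - k) = m := by
    simp only [Finset.mem_range] at hk; omega
  rw [this]
lemma HN_nil (m : ℕ) :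
    HN (m+1) [] + HN m [] * Yh = ((-1:ℚ)^m) • (Yh^m * (Xh+Yh)) := by
  induction m with
  | zero =>
    rw [HN, HN, Hf_nil]
    simp
  | succ m ih =>
    rw [HN, HN, Hf_nil, Hf_nil, Finset.sum_range_succ _ (m+1), Nat.sub_self, pow_zero, mul_one,
      smul_add]
    have hS : (∑ k ∈ Finset.range (m+1), Yh^k * (Xh+Yh) * Yh^(m+1-k))
        = (∑ k ∈ Finset.range (m+1), Yh^k * (Xh+Yh) * Yh^(m-k)) * Yh := by
      rw [Finset.sum_mul]
      refine Finset.sum_congr rfl fun k hk => ?_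
      simp only [Finset.mem_range] at hk
      rw [show m+1-k = (m-k)+1 from by omega, pow_succ, ← mul_assoc]
    have h2 : ((-1:ℚ)^(m+1)) • (∑ k ∈ Finset.range (m+1), Yh^k * (Xh+Yh) * Yh^(m+1-k))
        = - (((-1:ℚ)^m • ∑ k ∈ Finset.range (m+1), Yh^k * (Xh+Yh) * Yh^(m-k)) * Yh) := by
      rw [hS, smul_mul_assoc, pow_succ, mul_neg_one, neg_smul]
    rw [h2]
    abel
lemma eH0 : eH 0 = Xh := if_pos rfl
lemma eH1 : eH 1 = -Yh := by rw [eH, if_neg (by decide)]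
lemma ltr_one_mul (c : Ltr) : (1:Ltr) * c = c := by fin_cases c <;> rfl
lemma ltr_zero_mul (c : Ltr) : (0:Ltr) * c = 0 := by fin_cases c <;> rfl
lemma ltr_mul_one (c : Ltr) : c * (1:Ltr) = c := by fin_cases c <;> rfl
lemma ltr_mul_zero (c : Ltr) : c * (0:Ltr) = 0 := by fin_cases c <;> rfl
lemma mstE_nil_right (l : List Ltr) : mstE l [] = 0 := by
  rcases l with _ | ⟨a, _ | ⟨a', as⟩⟩ <;> rw [mstE] <;> (intros; rename_i h; cases h)
lemma mstE_one_left (a b : Ltr) (bs : List Ltr) :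
    mstE [a] (b :: bs) = ew ((b :: bs).map (fun c => a * c)) := by rw [mstE]
lemma mstE_single_right (a a' b : Ltr) (as : List Ltr) :
    mstE (a :: a' :: as) [b] = ew ((a :: a' :: as).map (fun c => c * b)) := by rw [mstE]
lemma mstE_rec (a a' b b' : Ltr) (as bs : List Ltr) :
    mstE (a :: a' :: as) (b :: b' :: bs)
      = eH (a * b) * mstE (a' :: as) (b :: b' :: bs)
      + eH (a * b) * mstE (a :: a' :: as) (b' :: bs)
      - eH (a * b) * Xh * mstE (a' :: as) (b' :: bs) := by rw [mstE]
noncomputable def Pf (n : ℕ) (b : List Ltr) : H := mstE (List.replicate n 1 ++ [0]) b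
noncomputable def Qf (n : ℕ) (b : List Ltr) : H := mstE (List.replicate (n+1) 1) b
lemma ew_cons0 (l : List Ltr) : ew ((0:Ltr) :: l) = Xh * ew l := by
  unfold ew
  rw [← X_mul_wrd, mul_smul_comm]
  congr 2
  all_goals simp [List.count_cons]
lemma ew_cons1 (l : List Ltr) : ew ((1:Ltr) :: l) = -(Yh * ew l) := by
  unfold ew
  rw [← Y_mul_wrd, mul_smul_comm, ← neg_smul]
  congr 1
  rw [List.count_cons]
  simp [pow_succ]
lemma wrd_replicate0 (m : ℕ) : wrd (List.replicate m 0) = Xh ^ m := by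
  induction m with
  | zero => simp [wrd_nil]
  | succ m ih => rw [List.replicate_succ, wrd_cons, ih, pow_succ']; rfl
lemma ew_replicate0 (m : ℕ) : ew (List.replicate m 0) = Xh ^ m := by
  unfold ew
  rw [wrd_replicate0]
  simp [List.count_replicate]
lemma ew_replicate1 (m : ℕ) : ew (List.replicate m 1) = ((-1:ℚ)^m) • Yh ^ m := by
  unfold ew
  rw [wrd_replicate]
  simp [List.count_replicate]
lemma repl_succ_app (n : ℕ) :
    List.replicate (n+1) (1:Ltr) ++ [(0:Ltr)] = 1 :: (List.replicate n 1 ++ [0]) := rfl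
lemma Qf_rec (n : ℕ) (b b' : Ltr) (bs : List Ltr) :
    Qf (n+1) (b :: b' :: bs)
      = eH b * Qf n (b :: b' :: bs) + eH b * Qf (n+1) (b' :: bs)
        - eH b * Xh * Qf n (b' :: bs) := by
  show mstE ((1:Ltr) :: (1:Ltr) :: List.replicate n 1) _ = _
  rw [mstE_rec, ltr_one_mul]
  rfl
lemma Pf_rec (n : ℕ) (b b' : Ltr) (bs : List Ltr) :
    Pf (n+1) (b :: b' :: bs)
      = eH b * Pf n (b :: b' :: bs) + eH b * Pf (n+1) (b' :: bs)
        - eH b * Xh * Pf n (b' :: bs) := by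
  obtain ⟨h, t, ht⟩ : ∃ h t, List.replicate n (1:Ltr) ++ [(0:Ltr)] = h :: t := by
    cases n
    · exact ⟨0, [], rfl⟩
    · exact ⟨1, _, rfl⟩
  show mstE (List.replicate (n+1) (1:Ltr) ++ [(0:Ltr)]) _ = _
  rw [repl_succ_app, ht, mstE_rec, ltr_one_mul, ← ht]
  rfl
lemma Qf_zero (b : Ltr) (bs : List Ltr) : Qf 0 (b :: bs) = ew (b :: bs) := by
  show mstE [(1:Ltr)] _ = _
  rw [mstE_one_left]
  congr 1
  simp [ltr_one_mul]
lemma Pf_zero (b : Ltr) (bs : List Ltr) : Pf 0 (b :: bs) = Xh ^ (b :: bs).length := by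
  show mstE [(0:Ltr)] _ = _
  rw [mstE_one_left]
  have : (b :: bs).map (fun c => (0:Ltr) * c) = List.replicate (b :: bs).length 0 := by
    simp [ltr_zero_mul, List.map_const']
    rfl
  rw [this, ew_replicate0]
lemma Qf_single0 (n : ℕ) : Qf n [(0:Ltr)] = Xh ^ (n+1) := by
  cases n with
  | zero =>
    show mstE [(1:Ltr)] _ = _
    rw [mstE_one_left]
    simp [ltr_one_mul]
    rw [show ((0:Ltr) :: [] : List Ltr) = List.replicate 1 0 from rfl, ew_replicate0, pow_one]
  | succ n =>
    show mstE ((1:Ltr) :: (1:Ltr) :: List.replicate n 1) _ = _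
    rw [mstE_single_right]
    have : ((1:Ltr) :: (1:Ltr) :: List.replicate n 1).map (fun c => c * (0:Ltr))
        = List.replicate (n+2) 0 := by
      simp [ltr_mul_zero, List.map_const']
      rfl
    rw [this, ew_replicate0]
lemma Qf_single1 (n : ℕ) : Qf n [(1:Ltr)] = ((-1:ℚ)^(n+1)) • Yh ^ (n+1) := by
  cases n with
  | zero =>
    show mstE [(1:Ltr)] _ = _
    rw [mstE_one_left]
    simp only [List.map, ltr_one_mul]
    rw [show ((1:Ltr) :: [] : List Ltr) = List.replicate 1 1 from rfl, ew_replicate1, pow_one]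
  | succ n =>
    show mstE ((1:Ltr) :: (1:Ltr) :: List.replicate n 1) _ = _
    rw [mstE_single_right]
    have : ((1:Ltr) :: (1:Ltr) :: List.replicate n 1).map (fun c => c * (1:Ltr))
        = List.replicate (n+2) 1 := by
      simp [ltr_mul_one]
      rfl
    rw [this, ew_replicate1]
lemma Pf_single0 (n : ℕ) : Pf (n+1) [(0:Ltr)] = Xh ^ (n+2) := by
  obtain ⟨h, t, ht⟩ : ∃ h t, List.replicate n (1:Ltr) ++ [(0:Ltr)] = h :: t := by
    cases n
    · exact ⟨0, [], rfl⟩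
    · exact ⟨1, _, rfl⟩
  show mstE (List.replicate (n+1) (1:Ltr) ++ [(0:Ltr)]) _ = _
  rw [repl_succ_app, ht, mstE_single_right,
    show ((1:Ltr)) :: h :: t = List.replicate (n+1) (1:Ltr) ++ [(0:Ltr)] from by
      rw [repl_succ_app, ht]]
  have : (List.replicate (n+1) (1:Ltr) ++ [(0:Ltr)]).map (fun c => c * (0:Ltr))
      = List.replicate (n+2) 0 := by
    simp only [List.map_append, List.map_replicate, ltr_mul_zero, List.map_cons, List.map_nil]
    try rw [show List.replicate (n+2) (0:Ltr) = List.replicate (n+1) (0:Ltr) ++ [0] from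
      List.replicate_succ' (n := n+1) (a := (0:Ltr))]
  rw [this, ew_replicate0]
lemma Pf_single1 (n : ℕ) : Pf (n+1) [(1:Ltr)] = ((-1:ℚ)^(n+1)) • (Yh ^ (n+1) * Xh) := by
  obtain ⟨h, t, ht⟩ : ∃ h t, List.replicate n (1:Ltr) ++ [(0:Ltr)] = h :: t := by
    cases n
    · exact ⟨0, [], rfl⟩
    · exact ⟨1, _, rfl⟩
  show mstE (List.replicate (n+1) (1:Ltr) ++ [(0:Ltr)]) _ = _
  rw [repl_succ_app, ht, mstE_single_right,
    show ((1:Ltr)) :: h :: t = List.replicate (n+1) (1:Ltr) ++ [(0:Ltr)] from by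
      rw [repl_succ_app, ht]]
  have h1 : (List.replicate (n+1) (1:Ltr) ++ [(0:Ltr)]).map (fun c => c * (1:Ltr))
      = List.replicate (n+1) (1:Ltr) ++ [(0:Ltr)] := by
    simp [ltr_mul_one]
  rw [h1]
  unfold ew
  rw [wrd_append, wrd_replicate]
  congr 1
  all_goals simp [List.count_replicate]
lemma Qf_cons0 (m : ℕ) (c : Ltr) (cs : List Ltr) :
    Qf m ((0:Ltr) :: c :: cs) = Xh * Qf m (c :: cs) := by
  induction m with
  | zero => rw [Qf_zero, Qf_zero, ew_cons0]
  | succ m ih =>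
    rw [Qf_rec, ih, eH0]
    noncomm_ring
lemma Pf_cons0 (m : ℕ) (c : Ltr) (cs : List Ltr) :
    Pf m ((0:Ltr) :: c :: cs) = Xh * Pf m (c :: cs) := by
  induction m with
  | zero =>
    rw [Pf_zero, Pf_zero, List.length_cons, pow_succ']
  | succ m ih =>
    rw [Pf_rec, ih, eH0]
    noncomm_ring
noncomputable def K (m : ℕ) (b : List Ltr) : H :=
  ((-1:ℚ)^(b.count 1)) • (Qf m b - Pf m b)
lemma count1_cons0 (t : List Ltr) : ((0:Ltr) :: t).count 1 = t.count 1 := by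
  simp [List.count_cons]
lemma count1_cons1 (t : List Ltr) : ((1:Ltr) :: t).count 1 = t.count 1 + 1 := by
  simp [List.count_cons]
lemma K_nil (m : ℕ) : K m [] = 0 := by
  rw [K, Qf, Pf, mstE_nil_right, mstE_nil_right]
  simp
lemma K_cons0 (m : ℕ) (c : Ltr) (cs : List Ltr) :
    K m ((0:Ltr) :: c :: cs) = Xh * K m (c :: cs) := by
  rw [K, K, count1_cons0, Qf_cons0, Pf_cons0, mul_smul_comm, mul_sub]
lemma K_rec1 (m : ℕ) (c : Ltr) (cs : List Ltr) :
    K (m+1) ((1:Ltr) :: c :: cs)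
      = -(Yh * K m ((1:Ltr) :: c :: cs)) + Yh * K (m+1) (c :: cs)
        - Yh * Xh * K m (c :: cs) := by
  rw [K, K, K, K, Qf_rec, Pf_rec, eH1, count1_cons1, pow_succ]
  simp only [mul_smul_comm, smul_sub, smul_add, neg_mul, neg_smul, mul_sub, mul_add, mul_neg,
    mul_one, smul_neg]
  module
lemma K_single0 (n : ℕ) : K (n+1) [(0:Ltr)] = 0 := by
  rw [K, Qf_single0, Pf_single0]
  simp
lemma K_single1 (n : ℕ) : K (n+1) [(1:Ltr)] = ((-1:ℚ)^(n+1)) • (Yh^(n+1) * (Xh + Yh)) := by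
  rw [K, Qf_single1, Pf_single1]
  rw [show ([(1:Ltr)].count 1) = 1 by simp]
  rw [mul_add]
  rw [show Yh^(n+1) * Yh = Yh^(n+2) from (pow_succ Yh (n+1)).symm]
  simp only [smul_sub, smul_smul, pow_one]
  rw [smul_add]
  rw [show (-1:ℚ) * (-1)^(n+2) = (-1)^(n+1) from by ring_nf, show (-1:ℚ) * (-1)^(n+1) = (-1)^(n+2)
    from by ring_nf]
  module
lemma K_zero_cons (c : Ltr) (cs : List Ltr) :
    K 0 (c :: cs) = wrd (c :: cs) - ((-1:ℚ)^((c :: cs).count 1)) • Xh^(c :: cs).length := by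
  rw [K, Qf_zero, Pf_zero, ew, smul_sub, smul_smul, ← pow_add]
  congr 2
  rw [← two_mul]
  rw [pow_mul]
  norm_num
lemma MAIN : ∀ (n : ℕ) (b : List Ltr), Gf (n+1) b + Gf n b * Yh = K (n+1) b := by
  intro n
  induction n using Nat.strong_induction_on with
  | _ n IHn =>
    intro b
    induction b with
    | nil =>
      rw [Gf_nil, Gf_nil, K_nil, smul_mul_assoc, ← pow_succ Yh, pow_succ (-1:ℚ)]
      module
    | cons a t IHb =>
      fin_cases a
      · -- a = 0
        cases t with
        | nil =>
          rw [show ((⟨0, by omega⟩ : Ltr) :: ([] : List Ltr)) = [(0:Ltr)] from rfl,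
            Gf_cons0, Gf_cons0, Gf_nil, Gf_nil, K_single0, mul_smul_comm, mul_smul_comm,
            smul_mul_assoc, mul_assoc, ← pow_succ Yh, pow_succ (-1:ℚ)]
          module
        | cons c cs =>
          rw [show ((⟨0, by omega⟩ : Ltr) :: c :: cs) = ((0:Ltr) :: c :: cs) from rfl,
            Gf_cons0, Gf_cons0, K_cons0, ← IHb]
          noncomm_ring
      · -- a = 1
        cases t with
        | nil =>
          rw [show ((⟨1, by omega⟩ : Ltr) :: ([] : List Ltr)) = [(1:Ltr)] from rfl,
            Gf_cons1, Gf_cons1, K_single1, Gf_nil, Gf_nil,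
            eq_sub_of_add_eq (HN_nil n)]
          simp only [mul_smul_comm, smul_mul_assoc, smul_sub, smul_add, mul_sub, sub_mul,
            mul_add, add_mul, neg_mul, mul_neg, ← mul_assoc, ← pow_succ', ← pow_succ,
            pow_succ (-1:ℚ)]
          module
        | cons c cs =>
          rw [show ((⟨1, by omega⟩ : Ltr) :: c :: cs) = ((1:Ltr) :: c :: cs) from rfl]
          cases n with
          | zero =>
            rw [K_rec1 0 c cs, ← IHb, Gf_cons1, Gf_cons1,
              show HN 1 (c::cs) = Hf 0 (c::cs) from rfl,
              show HN 0 (c::cs) = (0:H) from rfl,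
              Hf_eq 0, show HN 0 (c::cs) = (0:H) from rfl,
              Gf_zero, K_zero_cons, K_zero_cons, count1_cons1, List.length_cons,
              ← Y_mul_wrd]
            rw [show Xh ^ ((c::cs).length + 1) = Xh * Xh ^ (c::cs).length from pow_succ' Xh _]
            simp only [mul_smul_comm, smul_mul_assoc, smul_sub, smul_add, mul_sub, sub_mul,
              mul_add, add_mul, neg_mul, mul_neg, mul_zero, sub_zero, ← mul_assoc,
              pow_succ (-1:ℚ)]
            module
          | succ m =>
            rw [K_rec1 (m+1) c cs, ← IHn m (by omega) ((1:Ltr) :: c :: cs), ← IHn m (by omega)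
              (c :: cs), ← IHb, Gf_cons1, Gf_cons1, Gf_cons1,
              show HN (m+2) (c::cs) = Hf (m+1) (c::cs) from rfl,
              show HN (m+1) (c::cs) = Hf m (c::cs) from rfl,
              Hf_eq (m+1), show HN (m+1) (c::cs) = Hf m (c::cs) from rfl,
              Hf_eq m]
            noncomm_ring
lemma mst_wrd_wrd (l₁ l₂ : List Ltr) :
    mst (wrd l₁) (wrd l₂)
      = (((-1:ℚ)^(l₁.count 1)) * ((-1:ℚ)^(l₂.count 1))) • mstE l₁ l₂ := by
  rw [mst, show wrd l₁ = MonoidAlgebra.single (FreeMonoid.ofList l₁) (1:ℚ) from rfl,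
    show wrd l₂ = MonoidAlgebra.single (FreeMonoid.ofList l₂) (1:ℚ) from rfl]
  rw [MonoidAlgebra.sum_single_index (by simp)]
  rw [MonoidAlgebra.sum_single_index (by simp)]
  simp
lemma mst_add_left (A B g : H) : mst (A + B) g = mst A g + mst B g := by
  rw [mst, mst, mst]
  apply Finsupp.sum_add_index'
  · intro u; simp
  · intro u c₁ c₂
    rw [← Finsupp.sum_add]
    apply Finsupp.sum_congr
    intro v hv
    rw [← add_smul]
    congr 1
    ring
noncomputable def mstL (A : H) : H →ₗ[ℚ] H :=
  Finsupp.linearCombination ℚ (fun v : FreeMonoid Ltr => A.coeff.sum fun u cu =>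
    (cu * (-1:ℚ) ^ ((FreeMonoid.toList u).count 1)
      * (-1:ℚ) ^ ((FreeMonoid.toList v).count 1)) • mstE u.toList v.toList)
    ∘ₗ (MonoidAlgebra.coeffLinearEquiv ℚ : H ≃ₗ[ℚ] _).toLinearMap
lemma mst_eq_mstL (A g : H) : mst A g = mstL A g := by
  rw [mst, Finsupp.sum_comm, mstL]
  erw [Finsupp.linearCombination_apply]
  apply Finsupp.sum_congr
  intro v _
  rw [Finsupp.smul_sum]
  apply Finsupp.sum_congr
  intro u _
  rw [smul_smul]
  congr 1
  ring
lemma count_LP (n : ℕ) : (List.replicate (n+1) (1:Ltr) ++ [(0:Ltr)]).count 1 = n + 1 := by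
  simp [List.count_replicate]
lemma count_LQ (n : ℕ) : (List.replicate (n+2) (1:Ltr)).count 1 = n + 2 := by
  simp [List.count_replicate]
lemma hA (n : ℕ) : Yh^(n+1) * (Xh+Yh)
    = wrd (List.replicate (n+1) 1 ++ [0]) + wrd (List.replicate (n+2) 1) := by
  rw [mul_add, wrd_append, wrd_replicate, wrd_replicate]
  congr 1
  try rw [← pow_succ]
lemma KEY (n : ℕ) (g : H) :
    phiH (dia (n+1) (phiH g)) + phiH (dia n (phiH g)) * Yh
      = ((-1:ℚ)^(n+2)) • mst (Yh^(n+1) * (Xh+Yh)) g := by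
  have h1 : ((-1:ℚ)^(n+2)) * ((-1:ℚ)^(n+1)) = -1 := by
    rw [← pow_add, show n+2+(n+1) = 2*(n+1)+1 from by ring, pow_succ, pow_mul]
    norm_num
  have h2 : ((-1:ℚ)^(n+2)) * ((-1:ℚ)^(n+2)) = 1 := by
    rw [← pow_add, show n+2+(n+2) = 2*(n+2) from by ring, pow_mul]
    norm_num
  have main := linext
    (phiH.toLinearMap ∘ₗ diaL (n+1) ∘ₗ phiH.toLinearMap
      + (LinearMap.mulRight ℚ Yh) ∘ₗ phiH.toLinearMap ∘ₗ diaL n ∘ₗ phiH.toLinearMap)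
    (((-1:ℚ)^(n+2)) • mstL (Yh^(n+1) * (Xh+Yh)))
    (by
      intro b
      simp only [LinearMap.add_apply, LinearMap.comp_apply, LinearMap.smul_apply,
        AlgHom.toLinearMap_apply, LinearMap.mulRight_apply, ← dia_eq]
      rw [← Gf, ← Gf, MAIN n b, ← mst_eq_mstL, hA n, mst_add_left, mst_wrd_wrd, mst_wrd_wrd,
        count_LP, count_LQ, K]
      rw [show mstE (List.replicate (n+1) 1 ++ [0]) b = Pf (n+1) b from rfl,
        show mstE (List.replicate (n+2) 1) b = Qf (n+1) b from rfl]
      rw [smul_add, smul_smul, smul_smul, smul_sub, ← mul_assoc, ← mul_assoc, h1, h2,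
        neg_one_mul, one_mul, neg_smul]
      try abel) g
  simp only [LinearMap.add_apply, LinearMap.comp_apply, LinearMap.smul_apply,
    AlgHom.toLinearMap_apply, LinearMap.mulRight_apply, ← dia_eq] at main
  rw [main, mst_eq_mstL]

/-- For `n ≥ 1` and `w ∈ 𝔥`:
`f_n(w) = (-1)^{n+1} φ(yⁿz ⊛̃ φ(w))` with `z = x+y`. -/
theorem stmt12 (n : ℕ) (hn : 1 ≤ n) (w : H) :
    fZ (n : ℤ) w = ((-1 : ℚ) ^ (n + 1)) • phiH (mst (Yh ^ n * (Xh + Yh)) (phiH w)) := by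
  obtain ⟨m, rfl⟩ : ∃ m, n = m + 1 := ⟨n - 1, by omega⟩
  have hkey := KEY m (phiH w)
  rw [phiH_phiH] at hkey
  have happ := congrArg phiH hkey
  rw [map_add, map_mul, phiH_Y, phiH_phiH, phiH_phiH, map_smul] at happ
  have hfz : fZ ((m+1 : ℕ) : ℤ) w = dia (m+1) w - dia m w * Yh := by
    rw [fZ, if_neg (by omega), if_neg (by omega)]
    norm_num
  rw [hfz, show m + 1 + 1 = m + 2 from rfl, ← happ]
  ring_nf
  noncomm_ring
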